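/- Suppose I has almost minimal multiplicity with respect to K, i.e., λ(K·I/K·J) = 1 for any minimal reduction J of I. Then for any minimal reduction J of I, λ(K·I^n/K·J·I^{n−1}) = 1 for all n = 1, …, r_J^K(I). -/

import Mathlib

set_option synthInstance.maxHeartbeats 1000000
set_option maxHeartbeats 1000000

open IsLocalRing Polynomial

/-- λ(A/B): the length of `A/B` as an `R`-module for ideals `A`, `B`. -/
noncomputable def lamQ {R : Type*} [CommRing R] (A B : Ideal R) : WithBot ℕ∞ :=
  Order.krullDim (Submodule R ((↥A) ⧸ (Submodule.comap (Submodule.subtype A) B)))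

/-- The K-reduction number of `I` with respect to `J`:
`r_J^K(I) = min {n | K·I^{n+1} = K·J·I^n}`. -/
noncomputable def redK {R : Type*} [CommRing R] (K J I : Ideal R) : ℕ :=
  sInf {n : ℕ | K * I ^ (n + 1) = K * J * I ^ n}

/-- `J` is a reduction of `I`. -/
def IsReduction {R : Type*} [CommRing R] (J I : Ideal R) : Prop :=
  J ≤ I ∧ ∃ n : ℕ, J * I ^ n = I ^ (n + 1)

/-- `J` is a minimal reduction of `I`. -/
def IsMinimalReduction {R : Type*} [CommRing R] (J I : Ideal R) : Prop :=
  IsReduction J I ∧ ∀ J' : Ideal R, IsReduction J' I → J' ≤ J → J' = J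

section OrderAux

variable {α : Type*} [PartialOrder α] [BoundedOrder α]

lemma krullDim_eq_one_of_simpleOrder [IsSimpleOrder α] : Order.krullDim α = 1 := by
  apply le_antisymm
  · refine iSup_le fun p => ?_
    have hlen : p.length ≤ 1 := by
      by_contra h
      push_neg at h
      have h0 : p.toFun ⟨0, by omega⟩ < p.toFun ⟨1, by omega⟩ :=
        p.strictMono (by simp [Fin.lt_def])
      have h1 : p.toFun ⟨1, by omega⟩ < p.toFun ⟨2, by omega⟩ :=
        p.strictMono (by simp [Fin.lt_def])
      rcases IsSimpleOrder.eq_bot_or_eq_top (p.toFun ⟨1, by omega⟩) with hb | ht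
      · rw [hb] at h0; exact not_lt_bot h0
      · rw [ht] at h1; exact not_top_lt h1
    exact_mod_cast hlen
  · let q : LTSeries α := (RelSeries.singleton _ (⊥ : α)).snoc ⊤
      (by simpa [RelSeries.last_singleton] using (bot_lt_top : (⊥:α) < ⊤))
    have hq : q.length = 1 := by simp [q, RelSeries.snoc, RelSeries.append]
    have := Order.LTSeries.length_le_krullDim q
    rw [hq] at this
    exact_mod_cast this

lemma simpleOrder_of_krullDim_eq_one (h : Order.krullDim α = 1) : IsSimpleOrder α := by
  have hnt : Nontrivial α := by
    by_contra hsub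
    rw [not_nontrivial_iff_subsingleton] at hsub
    have := Order.krullDim_nonpos_of_subsingleton (α := α)
    rw [h] at this
    exact absurd this (by decide)
  refine ⟨fun a => ?_⟩
  by_contra hc
  push_neg at hc
  obtain ⟨hab, hat⟩ := hc
  have h1 : (⊥ : α) < a := bot_lt_iff_ne_bot.mpr hab
  have h2 : a < ⊤ := lt_top_iff_ne_top.mpr hat
  let q : LTSeries α :=
    (((RelSeries.singleton _ (⊥ : α)).snoc a
        (by simpa [RelSeries.last_singleton] using h1)).snoc ⊤
      (by simpa [RelSeries.last_snoc] using h2))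
  have hq : q.length = 2 := by simp [q, RelSeries.snoc, RelSeries.append]
  have := Order.LTSeries.length_le_krullDim q
  rw [hq, h] at this
  exact absurd this (by decide)

end OrderAux

section ModuleAux

variable {R : Type*} [CommRing R] [IsLocalRing R]

/-- The quotient module appearing in `lamQ`. -/
private abbrev QMod (A B : Ideal R) : Type _ :=
  (↥A) ⧸ (Submodule.comap (Submodule.subtype A) B)

private lemma mkQ_eq_zero_iff {A B : Ideal R} {a : R} (ha : a ∈ A) :
    (Submodule.Quotient.mk (⟨a, ha⟩ : ↥A) : QMod A B) = 0 ↔ a ∈ B := by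
  rw [Submodule.Quotient.mk_eq_zero, Submodule.mem_comap]
  rfl

private lemma mkQ_rep {A B : Ideal R} {a g : R} (ha : a ∈ A) (hg : g ∈ A) {c : R}
    (hc : a - c * g ∈ B) :
    (Submodule.Quotient.mk (⟨a, ha⟩ : ↥A) : QMod A B)
      = c • (Submodule.Quotient.mk (⟨g, hg⟩ : ↥A) : QMod A B) := by
  rw [← Submodule.Quotient.mk_smul, ← sub_eq_zero, ← Submodule.Quotient.mk_sub,
    Submodule.Quotient.mk_eq_zero, Submodule.mem_comap]
  simpa using hc

private lemma lamQ_eq_one_of {A B : Ideal R} {g : R} (hgA : g ∈ A)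
    (hspan : ∀ a ∈ A, ∃ c : R, a - c * g ∈ B)
    (hm : ∀ z ∈ maximalIdeal R, ∀ a ∈ A, z * a ∈ B)
    (hne : ¬ A ≤ B) : lamQ A B = 1 := by
  have hsimp : IsSimpleOrder (Submodule R (QMod A B)) := by
    have hnt : Nontrivial (QMod A B) := by
      obtain ⟨a, haA, haB⟩ := SetLike.not_le_iff_exists.mp hne
      exact ⟨Submodule.Quotient.mk ⟨a, haA⟩, 0, fun h => haB ((mkQ_eq_zero_iff haA).mp h)⟩
    constructor
    intro C
    by_cases hC : C = ⊥
    · exact Or.inl hC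
    refine Or.inr ?_
    obtain ⟨q, hqC, hq0⟩ : ∃ q ∈ C, q ≠ 0 := by
      by_contra h
      push_neg at h
      exact hC ((Submodule.eq_bot_iff C).mpr h)
    obtain ⟨⟨a, haA⟩, rfl⟩ := Submodule.Quotient.mk_surjective _ q
    have haB : a ∉ B := fun hb => hq0 ((mkQ_eq_zero_iff haA).mpr hb)
    obtain ⟨c, hc⟩ := hspan a haA
    have hcu : IsUnit c := by
      by_contra hcu
      have hcm : c ∈ maximalIdeal R := (IsLocalRing.mem_maximalIdeal c).mpr (mem_nonunits_iff.mpr hcu)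
      have hcg : c * g ∈ B := hm c hcm g hgA
      exact haB (by have : a = (a - c * g) + c * g := by ring
                    rw [this]; exact B.add_mem hc hcg)
    have hkey := mkQ_rep haA hgA hc (B := B)
    have hgC : (Submodule.Quotient.mk (⟨g, hgA⟩ : ↥A) : QMod A B) ∈ C := by
      obtain ⟨v, hv⟩ := hcu.exists_left_inv
      have := C.smul_mem v hqC
      rw [hkey, smul_smul, hv, one_smul] at this
      exact this
    refine eq_top_iff.mpr fun q' _ => ?_
    obtain ⟨⟨a', ha'⟩, rfl⟩ := Submodule.Quotient.mk_surjective _ q'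
    obtain ⟨c', hc'⟩ := hspan a' ha'
    rw [mkQ_rep ha' hgA hc']
    exact C.smul_mem c' hgC
  exact krullDim_eq_one_of_simpleOrder

private lemma not_le_of_lamQ_eq_one {A B : Ideal R} (h : lamQ A B = 1) : ¬ A ≤ B := by
  intro hle
  have hsub : Subsingleton (QMod A B) :=
    Submodule.Quotient.subsingleton_iff.mpr
      (eq_top_iff.mpr fun x _ => by
        rw [Submodule.mem_comap]; exact hle x.2)
  have hsub2 : Subsingleton (Submodule R (QMod A B)) := (Submodule.subsingleton_iff R).mpr hsub
  have hle0 := Order.krullDim_nonpos_of_subsingleton (α := Submodule R (QMod A B))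
  unfold lamQ at h
  rw [h] at hle0
  exact absurd hle0 (by decide)

private lemma lamQ_props_of_eq_one {A B : Ideal R} (h : lamQ A B = 1)
    {g : R} (hgA : g ∈ A) (hgB : g ∉ B) :
    (∀ a ∈ A, ∃ c : R, a - c * g ∈ B) ∧
      (∀ z ∈ maximalIdeal R, ∀ a ∈ A, z * a ∈ B) := by
  have hsimp : IsSimpleOrder (Submodule R (QMod A B)) := simpleOrder_of_krullDim_eq_one h
  set gbar : QMod A B := Submodule.Quotient.mk ⟨g, hgA⟩ with hgbar
  have hg0 : gbar ≠ 0 := fun h0 => hgB ((mkQ_eq_zero_iff hgA).mp h0)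
  have span_top : ∀ x : QMod A B, x ≠ 0 → Submodule.span R {x} = ⊤ := by
    intro x hx
    rcases hsimp.eq_bot_or_eq_top (Submodule.span R {x}) with hb | ht
    · exact absurd (Submodule.span_eq_bot.mp hb x rfl) hx
    · exact ht
  have hrep : ∀ a : R, ∀ ha : a ∈ A, ∃ c : R, a - c * g ∈ B ∧
      (Submodule.Quotient.mk (⟨a, ha⟩ : ↥A) : QMod A B) = c • gbar := by
    intro a ha
    have hx : (Submodule.Quotient.mk (⟨a, ha⟩ : ↥A) : QMod A B) ∈ Submodule.span R {gbar} := by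
      rw [span_top gbar hg0]; trivial
    obtain ⟨c, hc⟩ := Submodule.mem_span_singleton.mp hx
    refine ⟨c, ?_, hc.symm⟩
    have hz : (Submodule.Quotient.mk
        (⟨a - c * g, sub_mem ha (A.mul_mem_left c hgA)⟩ : ↥A) : QMod A B) = 0 := by
      rw [show (⟨a - c * g, _⟩ : ↥A) = ⟨a, ha⟩ - c • ⟨g, hgA⟩ from rfl,
        Submodule.Quotient.mk_sub, Submodule.Quotient.mk_smul, ← hgbar, hc, sub_self]
    exact (mkQ_eq_zero_iff _).mp hz
  have hzg : ∀ z ∈ maximalIdeal R, z • gbar = 0 := by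
    intro z hz
    by_contra h0
    have hmem : gbar ∈ Submodule.span R {z • gbar} := by
      rw [span_top _ h0]; trivial
    obtain ⟨c, hc⟩ := Submodule.mem_span_singleton.mp hmem
    have hone : (1 - c * z) • gbar = 0 := by
      rw [sub_smul, one_smul, mul_smul, hc, sub_self]
    have hunit : IsUnit (1 - c * z) :=
      IsLocalRing.isUnit_one_sub_self_of_mem_nonunits _
        ((IsLocalRing.mem_maximalIdeal _).mp ((maximalIdeal R).mul_mem_left c hz))
    obtain ⟨v, hv⟩ := hunit.exists_left_inv
    have : gbar = 0 := by
      have := congrArg (fun x => v • x) hone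
      simpa [smul_smul, hv] using this
    exact hg0 this
  constructor
  · intro a ha
    obtain ⟨c, hc, _⟩ := hrep a ha
    exact ⟨c, hc⟩
  · intro z hz a ha
    obtain ⟨c, hc, heq⟩ := hrep a ha
    have hz2 : (Submodule.Quotient.mk (⟨z * a, A.mul_mem_left z ha⟩ : ↥A) : QMod A B) = 0 := by
      rw [show (⟨z * a, _⟩ : ↥A) = z • ⟨a, ha⟩ from rfl, Submodule.Quotient.mk_smul, heq,
        smul_comm, hzg z hz, smul_zero]
    exact (mkQ_eq_zero_iff _).mp hz2

end ModuleAux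

/-- Let `(R,m)` be a Cohen–Macaulay local ring with infinite residue field, `I` an
`m`-primary ideal, `K ⊇ I` an ideal, and suppose `I` has almost minimal multiplicity with
respect to `K`, i.e. `λ(K·I/K·J) = 1` for any minimal reduction `J` of `I`. Then for any
minimal reduction `J` of `I`, `λ(K·I^n/K·J·I^{n−1}) = 1` for all `n = 1, …, r_J^K(I)`. -/
theorem stmt13 {R : Type*} [CommRing R] [IsNoetherianRing R] [IsLocalRing R]
    [Infinite (ResidueField R)]
    (d : ℕ) (hdim : ringKrullDim R = (d : ℕ))
    (hCM : ∃ rs : List R, rs.length = d ∧ (∀ r ∈ rs, r ∈ maximalIdeal R) ∧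
      RingTheory.Sequence.IsRegular R rs)
    (I : Ideal R) (hIprim : I.radical = maximalIdeal R)
    (K : Ideal R) (hIK : I ≤ K)
    (hAMM : ∀ J : Ideal R, IsMinimalReduction J I → lamQ (K * I) (K * J) = 1) :
    ∀ J : Ideal R, IsMinimalReduction J I →
      ∀ n : ℕ, 1 ≤ n → n ≤ redK K J I →
        lamQ (K * I ^ n) (K * J * I ^ (n - 1)) = 1 := by
  intro J hJ n hn1 hnr
  have hJI : J ≤ I := hJ.1.1
  have h1 := hAMM J hJ
  -- there is a product k0 * x ∈ K*I not in K*J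
  have hKIJ : ¬ K * I ≤ K * J := not_le_of_lamQ_eq_one h1
  obtain ⟨k0, hk0, x, hx, hxk0⟩ : ∃ k0 ∈ K, ∃ x ∈ I, k0 * x ∉ K * J := by
    by_contra hcon
    push_neg at hcon
    exact hKIJ (Ideal.mul_le.mpr hcon)
  have hg1 : k0 * x ∈ K * I := Ideal.mul_mem_mul hk0 hx
  obtain ⟨hspan1, hm1⟩ := lamQ_props_of_eq_one h1 hg1 hxk0
  -- the key induction
  have claim : ∀ q : ℕ, K * I ^ (q + 1) ≤ K * J * I ^ q ⊔ Ideal.span {k0 * x ^ (q + 1)} := by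
    intro q
    induction q with
    | zero =>
      intro a ha
      rw [pow_one] at ha
      obtain ⟨c, hc⟩ := hspan1 a ha
      rw [pow_zero, mul_one, pow_one]
      have : a = (a - c * (k0 * x)) + c * (k0 * x) := by ring
      rw [this]
      exact Submodule.add_mem_sup hc
        (Ideal.mem_span_singleton.mpr ⟨c, mul_comm _ _⟩)
    | succ q ih =>
      have hrw : K * I ^ (q + 2) = (K * I ^ (q + 1)) * I := by
        rw [pow_succ, mul_assoc]
      rw [hrw]
      refine Ideal.mul_le.mpr fun r hr s hs => ?_
      have hr' := ih hr
      rw [Submodule.mem_sup] at hr'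
      obtain ⟨b, hb, e, he, rfl⟩ := hr'
      obtain ⟨c, rfl⟩ := Ideal.mem_span_singleton'.mp he
      have hbs : b * s ∈ K * J * I ^ (q + 1) := by
        have : b * s ∈ (K * J * I ^ q) * I := Ideal.mul_mem_mul hb hs
        rwa [mul_assoc, ← pow_succ] at this
      obtain ⟨c', hc'⟩ := hspan1 (k0 * s) (Ideal.mul_mem_mul hk0 hs)
      have h2 : c * (x ^ (q + 1) * (k0 * s - c' * (k0 * x))) ∈ K * J * I ^ (q + 1) := by
        have hxq : x ^ (q + 1) * (k0 * s - c' * (k0 * x)) ∈ I ^ (q + 1) * (K * J) :=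
          Ideal.mul_mem_mul (Ideal.pow_mem_pow hx _) hc'
        rw [mul_comm (I ^ (q + 1)) (K * J)] at hxq
        exact Ideal.mul_mem_left _ c hxq
      have h3 : (c * c') * (k0 * x ^ (q + 2)) ∈ Ideal.span {k0 * x ^ (q + 2)} :=
        Ideal.mem_span_singleton'.mpr ⟨c * c', rfl⟩
      have heq : (b + c * (k0 * x ^ (q + 1))) * s
          = (b * s + c * (x ^ (q + 1) * (k0 * s - c' * (k0 * x))))
            + (c * c') * (k0 * x ^ (q + 2)) := by ring
      rw [heq]
      exact Submodule.add_mem_sup ((K * J * I ^ (q + 1)).add_mem hbs h2) h3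
  -- m-annihilation at each level
  have hmn : ∀ q : ℕ, ∀ z ∈ maximalIdeal R, ∀ a ∈ K * I ^ (q + 1),
      z * a ∈ K * J * I ^ q := by
    intro q z hz a ha
    have ha' : a ∈ (K * I) * I ^ q := by
      rwa [pow_succ', ← mul_assoc] at ha
    refine Submodule.mul_induction_on ha' (fun r hr s hs => ?_) (fun u v hu hv => ?_)
    · have : z * (r * s) = (z * r) * s := by ring
      rw [this]
      exact Ideal.mul_mem_mul (hm1 z hz r hr) hs
    · rw [mul_add]
      exact Ideal.add_mem _ hu hv
  -- conclude
  obtain ⟨q, rfl⟩ : ∃ q, n = q + 1 := ⟨n - 1, (Nat.succ_pred_eq_of_pos hn1).symm⟩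
  have hq1 : q + 1 - 1 = q := rfl
  rw [hq1]
  have hgA : k0 * x ^ (q + 1) ∈ K * I ^ (q + 1) :=
    Ideal.mul_mem_mul hk0 (Ideal.pow_mem_pow hx _)
  refine lamQ_eq_one_of hgA ?_ (hmn q) ?_
  · intro a ha
    have := claim q ha
    rw [Submodule.mem_sup] at this
    obtain ⟨b, hb, e, he, rfl⟩ := this
    obtain ⟨c, rfl⟩ := Ideal.mem_span_singleton'.mp he
    refine ⟨c, ?_⟩
    have hsimp : b + c * (k0 * x ^ (q + 1)) - c * (k0 * x ^ (q + 1)) = b := by ring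
    rw [hsimp]
    exact hb
  · intro hle
    have hge : K * J * I ^ q ≤ K * I ^ (q + 1) := by
      have hKII : K * I * I ^ q = K * I ^ (q + 1) := by rw [mul_assoc, ← pow_succ']
      exact le_trans (Ideal.mul_mono (Ideal.mul_mono_right hJI) le_rfl) (le_of_eq hKII)
    have heq : K * I ^ (q + 1) = K * J * I ^ q := le_antisymm hle hge
    have hmem : q ∈ {m : ℕ | K * I ^ (m + 1) = K * J * I ^ m} := heq
    have : redK K J I ≤ q := Nat.sInf_le hmem
    omega
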